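/- Let M and N be matroids on disjoint finite ground sets and let M □ N be their free product (bases are sets B with |B| = r(M)+r(N), B ∩ E(M) independent in M, and B ∩ E(N) spanning in N). Then a set F ⊆ E(M) ∪ E(N) with F ≠ E(M) is a cyclic flat of M □ N if and only if either (i) F ⊊ E(M) and F is a cyclic flat of M, or (ii) E(M) ⊊ F and F − E(M) is a cyclic flat of N; moreover E(M) is a cyclic flat of M □ N if and only if E(M) is a cyclic flat of M and ∅ is a cyclic flat of N. -/

import Mathlib

open Matroid Set

variable {α : Type*}

/-- An element that lies in every base of `M`; a coloop. -/
def MCoPaper.Coloop (M : Matroid α) (e : α) : Prop := ∀ B, M.IsBase B → e ∈ B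

/-- A circuit: a minimal dependent subset of the ground set. -/
def MCoPaper.Circuit (M : Matroid α) (C : Set α) : Prop :=
  C ⊆ M.E ∧ ¬ M.Indep C ∧ ∀ x ∈ C, M.Indep (C \ {x})

/-- A cyclic flat: a flat whose restriction has no coloops. -/
def MCoPaper.CyclicFlat (M : Matroid α) (F : Set α) : Prop :=
  M.IsFlat F ∧ ∀ e ∈ F, ¬ MCoPaper.Coloop (M ↾ F) e

/-- The rank of a set: the largest cardinality of an independent subset. -/
noncomputable def MCoPaper.rk (M : Matroid α) (X : Set α) : ℕ :=
  sSup {n | ∃ I, M.Indep I ∧ I ⊆ X ∧ I.ncard = n}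

open MCoPaper Classical in
/-- Mason's β function. -/
noncomputable def MCoPaper.beta [Fintype α] (M : Matroid α) (X : Finset α) : ℤ :=
  (rk M M.E : ℤ) - rk M ↑X -
    ∑ Y ∈ (Finset.univ.filter (fun Y : Finset α => CyclicFlat M ↑Y ∧ X ⊂ Y)).attach,
      MCoPaper.beta M Y.1
  termination_by (Fintype.card α - X.card : ℕ)
  decreasing_by
    have hY := Y.2
    simp only [Finset.mem_filter, Finset.mem_univ, true_and] at hY
    have h1 : X.card < Y.1.card := Finset.card_lt_card hY.2
    have h2 : Y.1.card ≤ Fintype.card α := Y.1.card_le_univ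
    omega

open MCoPaper Classical in
/-- Mason's α function. -/
noncomputable def MCoPaper.alpha [Fintype α] (M : Matroid α) (X : Finset α) : ℤ :=
  ((X.card : ℤ) - rk M ↑X) -
    ∑ F ∈ (Finset.univ.filter (fun F : Finset α => M.IsFlat ↑F ∧ F ⊂ X)).attach,
      MCoPaper.alpha M F.1
  termination_by X.card
  decreasing_by
    have hF := F.2
    simp only [Finset.mem_filter, Finset.mem_univ, true_and] at hF
    exact Finset.card_lt_card hF.2

/-- `A : Fin n → Set α` is a presentation of `M`. -/
def MCoPaper.IsPresentation (M : Matroid α) {n : ℕ} (A : Fin n → Set α) : Prop :=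
  (∀ i, A i ⊆ M.E) ∧
    ∀ I : Set α, M.Indep I ↔ ∃ φ : α → Fin n, Set.InjOn φ I ∧ ∀ x ∈ I, x ∈ A (φ x)

/-- `M` is a transversal matroid. -/
def MCoPaper.Transversal (M : Matroid α) : Prop :=
  ∃ (n : ℕ) (A : Fin n → Set α), MCoPaper.IsPresentation M A

/-- `B` is a fundamental basis of `M`. -/
def MCoPaper.FundBasis (M : Matroid α) (B : Set α) : Prop :=
  M.IsBase B ∧ ∀ F, MCoPaper.CyclicFlat M F → F ⊆ M.closure (B ∩ F)

/-- `M` is a fundamental transversal matroid. -/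
def MCoPaper.FundTransversal (M : Matroid α) : Prop :=
  ∃ B, MCoPaper.FundBasis M B

open MCoPaper

namespace MCoPaper

variable [Fintype α] {M : Matroid α} {I J K X Y S B F G : Set α} {e x : α} {n : ℕ}

lemma rk_bddAbove (M : Matroid α) (X : Set α) :
    BddAbove {n | ∃ I, M.Indep I ∧ I ⊆ X ∧ I.ncard = n} := by
  refine ⟨Fintype.card α, ?_⟩
  rintro n ⟨I, -, -, rfl⟩
  simpa [Set.ncard_univ] using Set.ncard_le_ncard (Set.subset_univ I) (Set.toFinite _)

lemma ncard_le_rk (hI : M.Indep I) (hIX : I ⊆ X) : I.ncard ≤ rk M X :=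
  le_csSup (rk_bddAbove M X) ⟨I, hI, hIX, rfl⟩

lemma rk_le (h : ∀ I, M.Indep I → I ⊆ X → I.ncard ≤ n) : rk M X ≤ n := by
  have h0 : (0:ℕ) ∈ {n | ∃ I, M.Indep I ∧ I ⊆ X ∧ I.ncard = n} := by
    exact ⟨∅, M.empty_indep, empty_subset X, by simp⟩
  refine csSup_le (Set.nonempty_of_mem h0) ?_
  rintro m ⟨I, hI, hIX, rfl⟩
  exact h I hI hIX

lemma rk_mono (h : X ⊆ Y) : rk M X ≤ rk M Y :=
  rk_le fun I hI hIX => ncard_le_rk hI (hIX.trans h)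

lemma exists_rk_witness (M : Matroid α) (X : Set α) :
    ∃ I, M.Indep I ∧ I ⊆ X ∧ I.ncard = rk M X := by
  have h0 : (0:ℕ) ∈ {n | ∃ I, M.Indep I ∧ I ⊆ X ∧ I.ncard = n} := by
    exact ⟨∅, M.empty_indep, empty_subset X, by simp⟩
  exact Nat.sSup_mem (Set.nonempty_of_mem h0) (rk_bddAbove M X)

lemma rk_indep (hI : M.Indep I) : rk M I = I.ncard :=
  le_antisymm (rk_le fun J _ hJI => Set.ncard_le_ncard hJI (Set.toFinite _))
    (ncard_le_rk hI Subset.rfl)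

lemma rk_empty (M : Matroid α) : rk M (∅ : Set α) = 0 := by
  simpa using rk_indep (M := M) M.empty_indep

lemma basis_rk_eq (h : M.IsBasis I X) : rk M X = I.ncard := by
  refine le_antisymm (rk_le fun J hJ hJX => ?_) (ncard_le_rk h.indep h.subset)
  obtain ⟨J', hJ', hJJ'⟩ := hJ.subset_isBasis_of_subset hJX h.subset_ground
  calc J.ncard ≤ J'.ncard := Set.ncard_le_ncard hJJ' (Set.toFinite _)
    _ = I.ncard := by rw [Set.ncard_def, hJ'.encard_eq_encard h, ← Set.ncard_def]

lemma _root_.Matroid.IsBase.rk_ground (hB : M.IsBase B) : rk M M.E = B.ncard :=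
  basis_rk_eq hB.isBasis_ground

lemma rk_ground_spanning (hS : S ⊆ M.E) (hsp : M.E ⊆ M.closure S) : rk M S = rk M M.E := by
  obtain ⟨J, hJ⟩ := M.exists_isBasis S hS
  have hB : M.IsBase J := hJ.indep.isBase_of_ground_subset_closure (by rwa [hJ.closure_eq_closure])
  rw [basis_rk_eq hJ, hB.rk_ground]

lemma spanning_of_rk_ground (hS : S ⊆ M.E) (h : rk M S = rk M M.E) : M.E ⊆ M.closure S := by
  obtain ⟨J, hJ⟩ := M.exists_isBasis S hS
  obtain ⟨B, hB, hJB⟩ := hJ.indep.exists_isBase_superset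
  have hJBe : J = B := by
    refine Set.eq_of_subset_of_ncard_le hJB ?_ (Set.toFinite _)
    rw [← hB.rk_ground, ← h, basis_rk_eq hJ]
  have : M.closure J = M.E := by rw [hJBe]; exact hB.closure_eq
  rw [← hJ.closure_eq_closure, this]

lemma nullity_mono (hIS : I ⊆ S) (hSE : S ⊆ M.E) :
    rk M S + I.ncard ≤ rk M I + S.ncard := by
  obtain ⟨J, hJ⟩ := M.exists_isBasis S hSE
  have h1 : rk M S = J.ncard := basis_rk_eq hJ
  have h2 : (J ∩ I).ncard ≤ rk M I :=
    ncard_le_rk (hJ.indep.subset inter_subset_left) inter_subset_right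
  have h3 : (J \ I).ncard ≤ (S \ I).ncard :=
    Set.ncard_le_ncard (diff_subset_diff_left hJ.subset) (Set.toFinite _)
  have h4 : (J ∩ I).ncard + (J \ I).ncard = J.ncard :=
    Set.ncard_inter_add_ncard_diff_eq_ncard J I (Set.toFinite _)
  have h5 : (S \ I).ncard = S.ncard - I.ncard := Set.ncard_diff hIS (Set.toFinite _)
  have h6 : I.ncard ≤ S.ncard := Set.ncard_le_ncard hIS (Set.toFinite _)
  omega

lemma flat_of_closure_subset (h : M.closure F ⊆ F) (hFE : F ⊆ M.E) : M.IsFlat F := by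
  refine ⟨fun I X hIF hIX => ?_, hFE⟩
  have hX := hIX.subset_closure
  rw [hIF.closure_eq_closure] at hX
  exact hX.trans h

lemma basis_of_maxcard (hI : M.Indep I) (hIF : I ⊆ F) (hFE : F ⊆ M.E)
    (hmax : ∀ I', M.Indep I' → I' ⊆ F → I'.ncard ≤ I.ncard) : M.IsBasis I F := by
  rw [isBasis_iff hFE]
  refine ⟨hI, hIF, fun J hJ hIJ hJF => ?_⟩
  exact Set.eq_of_subset_of_ncard_le hIJ (hmax J hJ hJF) (Set.toFinite _)

lemma proper_flat_rk_lt (hF : M.IsFlat F) (hne : F ≠ M.E) : rk M F < rk M M.E := by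
  obtain ⟨J, hJ⟩ := M.exists_isBasis F hF.subset_ground
  rcases lt_or_eq_of_le (rk_mono hF.subset_ground : rk M F ≤ rk M M.E) with h | h
  · exact h
  exfalso
  obtain ⟨B, hB, hJB⟩ := hJ.indep.exists_isBase_superset
  have hJBe : J = B := by
    refine Set.eq_of_subset_of_ncard_le hJB ?_ (Set.toFinite _)
    rw [← hB.rk_ground, ← h, basis_rk_eq hJ]
  apply hne
  have : M.closure J = M.E := by rw [hJBe]; exact hB.closure_eq
  rw [hJ.closure_eq_closure, hF.closure] at this
  exact this


variable {N P : Matroid α} {A : Set α}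

lemma split_ncard (hdisj : Disjoint M.E N.E) (hXE : X ⊆ M.E ∪ N.E) :
    (X ∩ M.E).ncard + (X ∩ N.E).ncard = X.ncard := by
  rw [← Set.ncard_union_eq (hdisj.mono inter_subset_right inter_subset_right)
    (Set.toFinite _) (Set.toFinite _)]
  congr 1
  rw [← inter_union_distrib_left, inter_eq_self_of_subset_left hXE]

lemma union_inter_eq_left (hdisj : Disjoint M.E N.E) (hA : A ⊆ M.E) (hB : B ⊆ N.E) :
    (A ∪ B) ∩ M.E = A := by
  rw [union_inter_distrib_right, inter_eq_self_of_subset_left hA,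
    Disjoint.inter_eq (hdisj.symm.mono_left hB), union_empty]

lemma union_inter_eq_right (hdisj : Disjoint M.E N.E) (hA : A ⊆ M.E) (hB : B ⊆ N.E) :
    (A ∪ B) ∩ N.E = B := by
  rw [union_inter_distrib_right, inter_eq_self_of_subset_left hB,
    Disjoint.inter_eq (hdisj.mono_left hA), empty_union]

lemma freeprod_indep_iff (hdisj : Disjoint M.E N.E)
    (hbase : ∀ B : Set α, P.IsBase B ↔
      (B ⊆ M.E ∪ N.E ∧ B.ncard = rk M M.E + rk N N.E ∧
        M.Indep (B ∩ M.E) ∧ N.E ⊆ N.closure (B ∩ N.E))) (I : Set α) :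
    P.Indep I ↔ I ⊆ M.E ∪ N.E ∧ M.Indep (I ∩ M.E) ∧
      I.ncard ≤ rk M M.E + rk N (I ∩ N.E) := by
  constructor
  · intro hI
    obtain ⟨B, hB, hIB⟩ := hI.exists_isBase_superset
    rw [hbase] at hB
    obtain ⟨hBE, hBcard, hBM, hBsp⟩ := hB
    have hIE : I ⊆ M.E ∪ N.E := hIB.trans hBE
    refine ⟨hIE, hBM.subset (inter_subset_inter_left _ hIB), ?_⟩
    have hsplitB := split_ncard hdisj hBE
    have hsplitI := split_ncard hdisj hIE
    have hrkB : rk N (B ∩ N.E) = rk N N.E := rk_ground_spanning inter_subset_right hBsp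
    have hmono := nullity_mono (M := N) (I := I ∩ N.E) (S := B ∩ N.E)
      (inter_subset_inter_left _ hIB) inter_subset_right
    have hcardM : (I ∩ M.E).ncard ≤ (B ∩ M.E).ncard :=
      Set.ncard_le_ncard (inter_subset_inter_left _ hIB) (Set.toFinite _)
    omega
  · rintro ⟨hIE, hIM, hIcard⟩
    obtain ⟨J, hJ⟩ := N.exists_isBasis (I ∩ N.E) inter_subset_right
    obtain ⟨Bn, hBn, hJBn⟩ := hJ.indep.exists_isBase_superset
    set S := Bn ∪ (I ∩ N.E) with hSdef
    have hSE : S ⊆ N.E := union_subset hBn.subset_ground inter_subset_right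
    have c1 : Bn.ncard = rk N N.E := hBn.rk_ground.symm
    have c2 : S.ncard = Bn.ncard + ((I ∩ N.E) \ Bn).ncard := by
      rw [← Set.ncard_union_eq Set.disjoint_sdiff_right (Set.toFinite _) (Set.toFinite _)]
      congr 1
      rw [Set.union_diff_self]
    have c3 : ((I ∩ N.E) \ Bn).ncard ≤ ((I ∩ N.E) \ J).ncard :=
      Set.ncard_le_ncard (diff_subset_diff_right hJBn) (Set.toFinite _)
    have c4 : ((I ∩ N.E) \ J).ncard = (I ∩ N.E).ncard - J.ncard :=
      Set.ncard_diff hJ.subset (Set.toFinite _)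
    have c4' : J.ncard ≤ (I ∩ N.E).ncard := Set.ncard_le_ncard hJ.subset (Set.toFinite _)
    have c5 : rk N (I ∩ N.E) = J.ncard := basis_rk_eq hJ
    have cS_ge : Bn.ncard ≤ S.ncard := Set.ncard_le_ncard subset_union_left (Set.toFinite _)
    have hsplitI := split_ncard hdisj hIE
    obtain ⟨Bm, hBm, hIMBm⟩ := hIM.exists_isBase_superset
    have cBm : Bm.ncard = rk M M.E := hBm.rk_ground.symm
    have hle1 : (I ∩ M.E).ncard ≤ rk M M.E + rk N N.E - S.ncard := by omega
    have hle2 : rk M M.E + rk N N.E - S.ncard ≤ Bm.ncard := by omega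
    obtain ⟨BM, hIMBM, hBMBm, hBMcard⟩ := Set.exists_subsuperset_card_eq hIMBm hle1 hle2
    have hBMM : BM ⊆ M.E := hBMBm.trans hBm.subset_ground
    have hML : (BM ∪ S) ∩ M.E = BM := union_inter_eq_left hdisj hBMM hSE
    have hNR : (BM ∪ S) ∩ N.E = S := union_inter_eq_right hdisj hBMM hSE
    have hBase : P.IsBase (BM ∪ S) := by
      rw [hbase]
      refine ⟨union_subset (hBMM.trans subset_union_left) (hSE.trans subset_union_right),
        ?_, ?_, ?_⟩
      · have := split_ncard hdisj (union_subset (hBMM.trans subset_union_left)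
          (hSE.trans subset_union_right))
        rw [hML, hNR] at this
        omega
      · rw [hML]; exact hBm.indep.subset hBMBm
      · rw [hNR]
        have h1 : N.closure Bn ⊆ N.closure S := N.closure_subset_closure subset_union_left
        rw [hBn.closure_eq] at h1
        exact h1
    refine hBase.indep.subset ?_
    intro x hx
    rcases hIE hx with h | h
    · exact Or.inl (hIMBM ⟨hx, h⟩)
    · exact Or.inr (Or.inr ⟨hx, h⟩)


lemma sub_indep_iff (hdisj : Disjoint M.E N.E)
    (hbase : ∀ B : Set α, P.IsBase B ↔
      (B ⊆ M.E ∪ N.E ∧ B.ncard = rk M M.E + rk N N.E ∧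
        M.Indep (B ∩ M.E) ∧ N.E ⊆ N.closure (B ∩ N.E)))
    (hK : K ⊆ M.E) : P.Indep K ↔ M.Indep K := by
  rw [freeprod_indep_iff hdisj hbase]
  have h1 : K ∩ M.E = K := inter_eq_self_of_subset_left hK
  have h2 : K ∩ N.E = ∅ := (hdisj.mono_left hK).inter_eq
  rw [h1, h2, rk_empty]
  constructor
  · rintro ⟨-, h, -⟩; exact h
  · intro h
    exact ⟨hK.trans subset_union_left, h, by simpa using ncard_le_rk h hK⟩

lemma restrict_base_eq (hdisj : Disjoint M.E N.E)
    (hbase : ∀ B : Set α, P.IsBase B ↔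
      (B ⊆ M.E ∪ N.E ∧ B.ncard = rk M M.E + rk N N.E ∧
        M.Indep (B ∩ M.E) ∧ N.E ⊆ N.closure (B ∩ N.E)))
    (hF : F ⊆ M.E) (B : Set α) : (P ↾ F).IsBase B ↔ (M ↾ F).IsBase B := by
  rw [Matroid.isBase_restrict_iff', Matroid.isBase_restrict_iff']
  unfold Matroid.IsBasis'
  have hiff : ∀ A : Set α, (P.Indep A ∧ A ⊆ F) ↔ (M.Indep A ∧ A ⊆ F) := fun A =>
    and_congr_left fun hAF => sub_indep_iff hdisj hbase (hAF.trans hF)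
  exact ⟨fun h => ⟨(hiff _).mp h.1, fun y hy hxy => h.2 ((hiff _).mpr hy) hxy⟩,
    fun h => ⟨(hiff _).mpr h.1, fun y hy hxy => h.2 ((hiff _).mp hy) hxy⟩⟩

lemma basis_transfer (hdisj : Disjoint M.E N.E) (hE : P.E = M.E ∪ N.E)
    (hbase : ∀ B : Set α, P.IsBase B ↔
      (B ⊆ M.E ∪ N.E ∧ B.ncard = rk M M.E + rk N N.E ∧
        M.Indep (B ∩ M.E) ∧ N.E ⊆ N.closure (B ∩ N.E)))
    (hF : F ⊆ M.E) : P.IsBasis I F ↔ M.IsBasis I F := by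
  have hiff : ∀ A : Set α, (P.Indep A ∧ A ⊆ F) ↔ (M.Indep A ∧ A ⊆ F) := fun A =>
    and_congr_left fun hAF => sub_indep_iff hdisj hbase (hAF.trans hF)
  unfold Matroid.IsBasis Maximal
  constructor
  · rintro ⟨⟨h1, h2⟩, -⟩
    exact ⟨⟨(hiff _).mp h1, fun y hy hxy => h2 ((hiff _).mpr hy) hxy⟩, hF⟩
  · rintro ⟨⟨h1, h2⟩, -⟩
    refine ⟨⟨(hiff _).mpr h1, fun y hy hxy => h2 ((hiff _).mp hy) hxy⟩, ?_⟩
    rw [hE]; exact hF.trans subset_union_left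

lemma caseA_flat (hdisj : Disjoint M.E N.E) (hE : P.E = M.E ∪ N.E)
    (hbase : ∀ B : Set α, P.IsBase B ↔
      (B ⊆ M.E ∪ N.E ∧ B.ncard = rk M M.E + rk N N.E ∧
        M.Indep (B ∩ M.E) ∧ N.E ⊆ N.closure (B ∩ N.E)))
    (hF : F ⊆ M.E) (hne : F ≠ M.E) : P.IsFlat F ↔ M.IsFlat F := by
  obtain ⟨Im, hIm⟩ := M.exists_isBasis F hF
  have hImP : P.IsBasis Im F := (basis_transfer hdisj hE hbase hF).mpr hIm
  have hImM : Im ⊆ M.E := hIm.indep.subset_ground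
  constructor
  · intro hPF
    refine flat_of_closure_subset ?_ hF
    intro e he
    have heE : e ∈ M.E := M.closure_subset_ground F he
    rw [← hIm.closure_eq_closure] at he
    rcases (hIm.indep.mem_closure_iff).mp he with hdep | hmem
    · have hPdep : P.Dep (insert e Im) := by
        rw [Matroid.dep_iff]
        refine ⟨fun hPi => hdep.not_indep
          ((sub_indep_iff hdisj hbase (insert_subset heE hImM)).mp hPi), ?_⟩
        rw [hE]
        exact insert_subset (Or.inl heE) (hImM.trans subset_union_left)
      have h2 : e ∈ P.closure Im := (hImP.indep.mem_closure_iff).mpr (Or.inl hPdep)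
      rw [hImP.closure_eq_closure, hPF.closure] at h2
      exact h2
    · exact hIm.subset hmem
  · intro hMF
    refine flat_of_closure_subset ?_ (by rw [hE]; exact hF.trans subset_union_left)
    intro e he
    have heE : e ∈ P.E := P.closure_subset_ground F he
    rw [← hImP.closure_eq_closure] at he
    rcases (hImP.indep.mem_closure_iff).mp he with hdep | hmem
    · rw [hE] at heE
      rcases heE with heM | heN
      · have hni : ¬ M.Indep (insert e Im) := fun hMi => hdep.not_indep
          ((sub_indep_iff hdisj hbase (insert_subset heM hImM)).mpr hMi)
        have hMdep : M.Dep (insert e Im) :=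
          Matroid.dep_iff.mpr ⟨hni, insert_subset heM hImM⟩
        have h2 : e ∈ M.closure Im := (hIm.indep.mem_closure_iff).mpr (Or.inl hMdep)
        rw [hIm.closure_eq_closure, hMF.closure] at h2
        exact h2
      · exfalso
        apply hdep.not_indep
        rw [freeprod_indep_iff hdisj hbase]
        have heM : e ∉ M.E := fun h => Set.disjoint_left.mp hdisj h heN
        have heIm : e ∉ Im := fun h => heM (hImM h)
        have hiM : insert e Im ∩ M.E = Im := by
          rw [Set.insert_inter_of_notMem heM, inter_eq_self_of_subset_left hImM]
        have hiN : insert e Im ∩ N.E = {e} := by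
          rw [Set.insert_inter_of_mem heN, (hdisj.mono_left hImM).inter_eq]
          simp
        refine ⟨insert_subset (Or.inr heN) (hImM.trans subset_union_left),
          by rw [hiM]; exact hIm.indep, ?_⟩
        rw [hiN]
        have hcard : (insert e Im).ncard = Im.ncard + 1 :=
          Set.ncard_insert_of_notMem heIm (Set.toFinite _)
        have hlt : rk M F < rk M M.E := proper_flat_rk_lt hMF hne
        have hIcard : Im.ncard = rk M F := (basis_rk_eq hIm).symm
        omega
    · exact hIm.subset hmem


lemma inter_NE (hdisj : Disjoint M.E N.E) (hFE : F ⊆ M.E ∪ N.E) :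
    F ∩ N.E = F \ M.E := by
  ext x
  constructor
  · rintro ⟨h1, h2⟩
    exact ⟨h1, fun h => Set.disjoint_left.mp hdisj h h2⟩
  · rintro ⟨h1, h2⟩
    exact ⟨h1, (hFE h1).resolve_left h2⟩

lemma caseB_card_le (hdisj : Disjoint M.E N.E)
    (hbase : ∀ B : Set α, P.IsBase B ↔
      (B ⊆ M.E ∪ N.E ∧ B.ncard = rk M M.E + rk N N.E ∧
        M.Indep (B ∩ M.E) ∧ N.E ⊆ N.closure (B ∩ N.E)))
    (hFE : F ⊆ M.E ∪ N.E) (hI : P.Indep I) (hIF : I ⊆ F) :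
    I.ncard ≤ rk M M.E + rk N (F \ M.E) := by
  rw [freeprod_indep_iff hdisj hbase] at hI
  obtain ⟨hIE, hIM, hIc⟩ := hI
  have h1 : I ∩ N.E ⊆ F \ M.E := by
    rw [← inter_NE hdisj hFE]
    exact inter_subset_inter_left _ hIF
  have h2 := rk_mono (M := N) h1
  omega

lemma caseB_basis (hdisj : Disjoint M.E N.E) (hE : P.E = M.E ∪ N.E)
    (hbase : ∀ B : Set α, P.IsBase B ↔
      (B ⊆ M.E ∪ N.E ∧ B.ncard = rk M M.E + rk N N.E ∧
        M.Indep (B ∩ M.E) ∧ N.E ⊆ N.closure (B ∩ N.E)))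
    (hMF : M.E ⊆ F) (hFE : F ⊆ M.E ∪ N.E)
    (hJ : N.IsBasis J (F \ M.E)) (hBm : M.IsBase Bm) :
    P.IsBasis (Bm ∪ J) F ∧ (Bm ∪ J).ncard = rk M M.E + rk N (F \ M.E) := by
  have hJN : J ⊆ N.E := hJ.indep.subset_ground
  have hBmM : Bm ⊆ M.E := hBm.subset_ground
  have hcard : (Bm ∪ J).ncard = Bm.ncard + J.ncard :=
    Set.ncard_union_eq (hdisj.mono hBmM hJN) (Set.toFinite _) (Set.toFinite _)
  have hcard2 : (Bm ∪ J).ncard = rk M M.E + rk N (F \ M.E) := by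
    rw [hcard, basis_rk_eq hJ, hBm.rk_ground]
  have hindep : P.Indep (Bm ∪ J) := by
    rw [freeprod_indep_iff hdisj hbase, union_inter_eq_left hdisj hBmM hJN,
      union_inter_eq_right hdisj hBmM hJN]
    refine ⟨union_subset (hBmM.trans subset_union_left) (hJN.trans subset_union_right),
      hBm.indep, ?_⟩
    rw [hcard, rk_indep hJ.indep, hBm.rk_ground]
  refine ⟨basis_of_maxcard hindep
    (union_subset (hBmM.trans hMF) (hJ.subset.trans diff_subset))
    (by rw [hE]; exact hFE) (fun I' hI' hI'F => ?_), hcard2⟩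
  rw [hcard2]
  exact caseB_card_le hdisj hbase hFE hI' hI'F

lemma caseB_flat (hdisj : Disjoint M.E N.E) (hE : P.E = M.E ∪ N.E)
    (hbase : ∀ B : Set α, P.IsBase B ↔
      (B ⊆ M.E ∪ N.E ∧ B.ncard = rk M M.E + rk N N.E ∧
        M.Indep (B ∩ M.E) ∧ N.E ⊆ N.closure (B ∩ N.E)))
    (hMF : M.E ⊆ F) (hFE : F ⊆ M.E ∪ N.E) :
    P.IsFlat F ↔ N.IsFlat (F \ M.E) := by
  have hGN : F \ M.E ⊆ N.E := fun x hx => ((hFE hx.1).resolve_left hx.2)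
  obtain ⟨J, hJ⟩ := N.exists_isBasis (F \ M.E) hGN
  obtain ⟨Bm, hBm⟩ := M.exists_isBase
  obtain ⟨hPB, hcard⟩ := caseB_basis hdisj hE hbase hMF hFE hJ hBm
  have hJN : J ⊆ N.E := hJ.indep.subset_ground
  have hBmM : Bm ⊆ M.E := hBm.subset_ground
  have hkey : ∀ e, e ∈ N.E → e ∉ J →
      (P.Indep (insert e (Bm ∪ J)) ↔ N.Indep (insert e J)) := by
    intro e heN heJ
    have heM : e ∉ M.E := fun h => Set.disjoint_left.mp hdisj h heN
    have heBJ : e ∉ Bm ∪ J := by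
      rintro (h | h)
      · exact heM (hBmM h)
      · exact heJ h
    have hiM : insert e (Bm ∪ J) ∩ M.E = Bm := by
      rw [Set.insert_inter_of_notMem heM, union_inter_eq_left hdisj hBmM hJN]
    have hiN : insert e (Bm ∪ J) ∩ N.E = insert e J := by
      rw [Set.insert_inter_of_mem heN, union_inter_eq_right hdisj hBmM hJN]
    have hc1 : (insert e (Bm ∪ J)).ncard = (Bm ∪ J).ncard + 1 :=
      Set.ncard_insert_of_notMem heBJ (Set.toFinite _)
    have hc2 : (insert e J).ncard = J.ncard + 1 :=
      Set.ncard_insert_of_notMem heJ (Set.toFinite _)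
    have hJcard : J.ncard = rk N (F \ M.E) := (basis_rk_eq hJ).symm
    rw [freeprod_indep_iff hdisj hbase, hiM, hiN]
    constructor
    · rintro ⟨-, -, hc⟩
      obtain ⟨K, hK, hKsub, hKcard⟩ := exists_rk_witness N (insert e J)
      have hle : (insert e J).ncard ≤ K.ncard := by omega
      have hKeq : K = insert e J :=
        Set.eq_of_subset_of_ncard_le hKsub hle (Set.toFinite _)
      rw [← hKeq]
      exact hK
    · intro hNi
      have hrk : rk N (insert e J) = J.ncard + 1 := by rw [rk_indep hNi, hc2]
      refine ⟨insert_subset (Or.inr heN)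
        (union_subset (hBmM.trans subset_union_left) (hJN.trans subset_union_right)),
        hBm.indep, ?_⟩
      omega
  constructor
  · intro hPF
    refine flat_of_closure_subset ?_ hGN
    intro e he
    have heN : e ∈ N.E := N.closure_subset_ground _ he
    rw [← hJ.closure_eq_closure] at he
    rcases hJ.indep.mem_closure_iff.mp he with hdep | hmem
    · by_cases heJ : e ∈ J
      · exact hJ.subset heJ
      have hPdep : P.Dep (insert e (Bm ∪ J)) := by
        rw [Matroid.dep_iff]
        refine ⟨fun h => hdep.not_indep ((hkey e heN heJ).mp h), ?_⟩
        rw [hE]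
        exact insert_subset (Or.inr heN)
          (union_subset (hBmM.trans subset_union_left) (hJN.trans subset_union_right))
      have h2 : e ∈ P.closure (Bm ∪ J) := hPB.indep.mem_closure_iff.mpr (Or.inl hPdep)
      rw [hPB.closure_eq_closure, hPF.closure] at h2
      exact ⟨h2, fun h => Set.disjoint_left.mp hdisj h heN⟩
    · exact hJ.subset hmem
  · intro hNF
    refine flat_of_closure_subset ?_ (by rw [hE]; exact hFE)
    intro e he
    have heE : e ∈ P.E := P.closure_subset_ground _ he
    rw [← hPB.closure_eq_closure] at he
    rcases hPB.indep.mem_closure_iff.mp he with hdep | hmem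
    · rw [hE] at heE
      rcases heE with heM | heN
      · exact hMF heM
      · by_cases heJ : e ∈ J
        · exact (hJ.subset heJ).1
        have hnd : ¬ N.Indep (insert e J) := fun h => hdep.not_indep ((hkey e heN heJ).mpr h)
        have hNdep : N.Dep (insert e J) := Matroid.dep_iff.mpr ⟨hnd, insert_subset heN hJN⟩
        have h2 : e ∈ N.closure J := hJ.indep.mem_closure_iff.mpr (Or.inl hNdep)
        rw [hJ.closure_eq_closure, hNF.closure] at h2
        exact h2.1
    · rcases hmem with h | h
      · exact hMF (hBmM h)
      · exact (hJ.subset h).1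


lemma caseB_noColoop (hdisj : Disjoint M.E N.E) (hE : P.E = M.E ∪ N.E)
    (hbase : ∀ B : Set α, P.IsBase B ↔
      (B ⊆ M.E ∪ N.E ∧ B.ncard = rk M M.E + rk N N.E ∧
        M.Indep (B ∩ M.E) ∧ N.E ⊆ N.closure (B ∩ N.E)))
    (hMF : M.E ⊆ F) (hFE : F ⊆ M.E ∪ N.E)
    (hNcol : ∀ e ∈ F \ M.E, ¬ Coloop (N ↾ (F \ M.E)) e)
    (hGne : (F \ M.E).Nonempty) :
    ∀ e ∈ F, ¬ Coloop (P ↾ F) e := by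
  have hGN : F \ M.E ⊆ N.E := fun x hx => ((hFE hx.1).resolve_left hx.2)
  have hFP : F ⊆ P.E := by rw [hE]; exact hFE
  obtain ⟨J, hJ⟩ := N.exists_isBasis (F \ M.E) hGN
  have hJne : J ≠ F \ M.E := by
    intro hJG
    obtain ⟨g, hg⟩ := hGne
    refine hNcol g hg (fun B hB => ?_)
    have hBb : N.IsBasis B (F \ M.E) := (Matroid.isBase_restrict_iff hGN).mp hB
    have hGind : N.Indep (F \ M.E) := hJG ▸ hJ.indep
    have hBG : B = F \ M.E := hBb.eq_of_subset_indep hGind hBb.subset Subset.rfl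
    rw [hBG]; exact hg
  obtain ⟨x, hxG, hxJ⟩ : ∃ x, x ∈ F \ M.E ∧ x ∉ J := by
    by_contra h
    push_neg at h
    exact hJne (hJ.subset.antisymm h)
  intro e heF hcol
  by_cases heM : e ∈ M.E
  · obtain ⟨Bm, hBm⟩ := M.exists_isBase
    have hBmM := hBm.subset_ground
    by_cases heBm : e ∈ Bm
    · set I' := (Bm \ {e}) ∪ insert x J with hI'def
      have hB'M : Bm \ {e} ⊆ M.E := diff_subset.trans hBmM
      have hxN : x ∈ N.E := hGN hxG
      have hxJN : insert x J ⊆ N.E := insert_subset hxN hJ.indep.subset_ground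
      have hiM : I' ∩ M.E = Bm \ {e} := union_inter_eq_left hdisj hB'M hxJN
      have hiN : I' ∩ N.E = insert x J := union_inter_eq_right hdisj hB'M hxJN
      have hc1 : (Bm \ {e}).ncard = Bm.ncard - 1 := by
        rw [Set.ncard_diff (singleton_subset_iff.mpr heBm) (Set.toFinite _),
          Set.ncard_singleton]
      have hc2 : (insert x J).ncard = J.ncard + 1 :=
        Set.ncard_insert_of_notMem hxJ (Set.toFinite _)
      have hcardI : I'.ncard = (Bm \ {e}).ncard + (insert x J).ncard :=
        Set.ncard_union_eq (hdisj.mono hB'M hxJN) (Set.toFinite _) (Set.toFinite _)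
      have hBm1 : 1 ≤ Bm.ncard := by
        have : 0 < Bm.ncard := (Set.ncard_pos (Set.toFinite _)).mpr ⟨e, heBm⟩
        omega
      have hrkx : rk N (insert x J) = J.ncard := by
        have hle : rk N (insert x J) ≤ rk N (F \ M.E) :=
          rk_mono (insert_subset hxG hJ.subset)
        have hge : rk N J ≤ rk N (insert x J) := rk_mono (subset_insert _ _)
        rw [rk_indep hJ.indep] at hge
        have hJc : rk N (F \ M.E) = J.ncard := basis_rk_eq hJ
        omega
      have hBmr : Bm.ncard = rk M M.E := hBm.rk_ground.symm
      have hJc : J.ncard = rk N (F \ M.E) := (basis_rk_eq hJ).symm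
      have hIind : P.Indep I' := by
        rw [freeprod_indep_iff hdisj hbase, hiM, hiN]
        refine ⟨union_subset (hB'M.trans subset_union_left)
          (hxJN.trans subset_union_right), hBm.indep.subset diff_subset, ?_⟩
        omega
      have hmax : ∀ I'', P.Indep I'' → I'' ⊆ F → I''.ncard ≤ I'.ncard := by
        intro I'' h1 h2
        have h3 := caseB_card_le hdisj hbase hFE h1 h2
        omega
      have hI'F : I' ⊆ F := union_subset ((diff_subset.trans hBmM).trans hMF)
        (insert_subset hxG.1 (fun y hy => (hJ.subset hy).1))
      have hPB : P.IsBasis I' F := basis_of_maxcard hIind hI'F hFP hmax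
      have hmem := hcol I' ((Matroid.isBase_restrict_iff hFP).mpr hPB)
      rcases hmem with h | h
      · exact h.2 rfl
      · exact Set.disjoint_left.mp hdisj heM (hxJN h)
    · obtain ⟨hPB, -⟩ := caseB_basis hdisj hE hbase hMF hFE hJ hBm
      have hmem := hcol (Bm ∪ J) ((Matroid.isBase_restrict_iff hFP).mpr hPB)
      rcases hmem with h | h
      · exact heBm h
      · exact Set.disjoint_left.mp hdisj heM (hJ.indep.subset_ground h)
  · have heG : e ∈ F \ M.E := ⟨heF, heM⟩
    obtain ⟨K, hK⟩ := not_forall.mp (hNcol e heG)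
    obtain ⟨hKb, heK⟩ := Classical.not_imp.mp hK
    have hKb' : N.IsBasis K (F \ M.E) := (Matroid.isBase_restrict_iff hGN).mp hKb
    obtain ⟨Bm, hBm⟩ := M.exists_isBase
    obtain ⟨hPB, -⟩ := caseB_basis hdisj hE hbase hMF hFE hKb' hBm
    have hmem := hcol (Bm ∪ K) ((Matroid.isBase_restrict_iff hFP).mpr hPB)
    rcases hmem with h | h
    · exact Set.disjoint_left.mp hdisj (hBm.subset_ground h) (hGN heG)
    · exact heK h

lemma caseB_N_notColoop (hdisj : Disjoint M.E N.E) (hE : P.E = M.E ∪ N.E)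
    (hbase : ∀ B : Set α, P.IsBase B ↔
      (B ⊆ M.E ∪ N.E ∧ B.ncard = rk M M.E + rk N N.E ∧
        M.Indep (B ∩ M.E) ∧ N.E ⊆ N.closure (B ∩ N.E)))
    (hMF : M.E ⊆ F) (hFE : F ⊆ M.E ∪ N.E) {e : α} (heG : e ∈ F \ M.E)
    (h : ¬ Coloop (P ↾ F) e) : ¬ Coloop (N ↾ (F \ M.E)) e := by
  have hGN : F \ M.E ⊆ N.E := fun x hx => ((hFE hx.1).resolve_left hx.2)
  have hFP : F ⊆ P.E := by rw [hE]; exact hFE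
  obtain ⟨I, hI⟩ := not_forall.mp h
  obtain ⟨hIb, heI⟩ := Classical.not_imp.mp hI
  have hIB : P.IsBasis I F := (Matroid.isBase_restrict_iff hFP).mp hIb
  obtain ⟨J, hJ⟩ := N.exists_isBasis (F \ M.E) hGN
  obtain ⟨Bm, hBm⟩ := M.exists_isBase
  obtain ⟨hPB, hcard⟩ := caseB_basis hdisj hE hbase hMF hFE hJ hBm
  have hIc : I.ncard = rk M M.E + rk N (F \ M.E) := by
    rw [← hcard, Set.ncard_def, hIB.encard_eq_encard hPB, ← Set.ncard_def]
  obtain ⟨hIE, hIM, hIcc⟩ := (freeprod_indep_iff hdisj hbase I).mp hIB.indep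
  have hINsub : I ∩ N.E ⊆ F \ M.E := by
    rw [← inter_NE hdisj hFE]
    exact inter_subset_inter_left _ hIB.subset
  have hrkIN : rk N (I ∩ N.E) = rk N (F \ M.E) :=
    le_antisymm (rk_mono hINsub) (by omega)
  obtain ⟨K, hKb⟩ := N.exists_isBasis (I ∩ N.E) inter_subset_right
  have hKc : K.ncard = rk N (I ∩ N.E) := (basis_rk_eq hKb).symm
  have hKG : N.IsBasis K (F \ M.E) := basis_of_maxcard hKb.indep
    (hKb.subset.trans hINsub) hGN (fun K' h1 h2 => by
      have h3 := ncard_le_rk h1 h2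
      omega)
  intro hcol
  have hmem := hcol K ((Matroid.isBase_restrict_iff hGN).mpr hKG)
  exact heI (hKb.subset hmem).1

end MCoPaper

theorem stmt19 [Fintype α] (M N P : Matroid α) (hdisj : Disjoint M.E N.E)
    (hE : P.E = M.E ∪ N.E)
    (hbase : ∀ B : Set α, P.IsBase B ↔
      (B ⊆ M.E ∪ N.E ∧ B.ncard = rk M M.E + rk N N.E ∧
        M.Indep (B ∩ M.E) ∧ N.E ⊆ N.closure (B ∩ N.E))) :
    (∀ F : Set α, F ⊆ M.E ∪ N.E → F ≠ M.E →
      (CyclicFlat P F ↔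
        ((F ⊂ M.E ∧ CyclicFlat M F) ∨ (M.E ⊂ F ∧ CyclicFlat N (F \ M.E))))) ∧
    (CyclicFlat P M.E ↔ (CyclicFlat M M.E ∧ CyclicFlat N ∅)) := by
  constructor
  · intro F hFE hne
    constructor
    · rintro ⟨hflat, hcyc⟩
      by_cases hFM : F ⊆ M.E
      · left
        exact ⟨hFM.ssubset_of_ne hne, (caseA_flat hdisj hE hbase hFM hne).mp hflat,
          fun e heF hcol => hcyc e heF
            (fun B hB => hcol B ((restrict_base_eq hdisj hbase hFM B).mp hB))⟩
      by_cases hMF : M.E ⊆ F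
      · right
        exact ⟨hMF.ssubset_of_ne (Ne.symm hne), (caseB_flat hdisj hE hbase hMF hFE).mp hflat,
          fun e heG => caseB_N_notColoop hdisj hE hbase hMF hFE heG (hcyc e heG.1)⟩
      · exfalso
        obtain ⟨y, hyF, hyM⟩ := not_subset.mp hFM
        obtain ⟨x, hxM, hxF⟩ := not_subset.mp hMF
        have hyN : y ∈ N.E := (hFE hyF).resolve_left hyM
        have hFP : F ⊆ P.E := by rw [hE]; exact hFE
        obtain ⟨I, hI0⟩ := not_forall.mp (hcyc y hyF)
        obtain ⟨hIb, hyI⟩ := Classical.not_imp.mp hI0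
        have hIB : P.IsBasis I F := (Matroid.isBase_restrict_iff hFP).mp hIb
        have hyCl : y ∈ P.closure I := hIB.subset_closure hyF
        have hyDep : P.Dep (insert y I) :=
          (hIB.indep.mem_closure_iff_of_notMem hyI).mp hyCl
        obtain ⟨hIE, hIM, hIc⟩ := (freeprod_indep_iff hdisj hbase I).mp hIB.indep
        have hiM : insert y I ∩ M.E = I ∩ M.E := Set.insert_inter_of_notMem hyM
        have hiN : insert y I ∩ N.E = insert y (I ∩ N.E) := Set.insert_inter_of_mem hyN
        have hcy : (insert y I).ncard = I.ncard + 1 :=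
          Set.ncard_insert_of_notMem hyI (Set.toFinite _)
        have hdep2 : ¬ (insert y I).ncard ≤ rk M M.E + rk N (insert y I ∩ N.E) := by
          intro hc
          apply hyDep.not_indep
          rw [freeprod_indep_iff hdisj hbase]
          exact ⟨insert_subset (Or.inr hyN) hIE, by rw [hiM]; exact hIM, hc⟩
        rw [hiN, hcy] at hdep2
        push_neg at hdep2
        have hmono1 : rk N (I ∩ N.E) ≤ rk N (insert y (I ∩ N.E)) :=
          rk_mono (subset_insert _ _)
        have hxI : x ∉ I := fun h => hxF (hIB.subset h)
        have hxCl : x ∈ P.closure I := by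
          refine hIB.indep.mem_closure_iff.mpr (Or.inl ?_)
          rw [Matroid.dep_iff]
          refine ⟨?_, insert_subset (by rw [hE]; exact Or.inl hxM)
            hIB.indep.subset_ground⟩
          intro hxi
          rw [freeprod_indep_iff hdisj hbase] at hxi
          obtain ⟨-, -, hc⟩ := hxi
          have hiN2 : insert x I ∩ N.E = I ∩ N.E :=
            Set.insert_inter_of_notMem (fun h => Set.disjoint_left.mp hdisj hxM h)
          have hcx : (insert x I).ncard = I.ncard + 1 :=
            Set.ncard_insert_of_notMem hxI (Set.toFinite _)
          rw [hiN2, hcx] at hc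
          omega
        rw [hIB.closure_eq_closure, hflat.closure] at hxCl
        exact hxF hxCl
    · rintro (⟨hss, hMflat, hMcol⟩ | ⟨hss, hNflat, hNcol⟩)
      · exact ⟨(caseA_flat hdisj hE hbase hss.subset hne).mpr hMflat,
          fun e heF hcol => hMcol e heF
            (fun B hB => hcol B ((restrict_base_eq hdisj hbase hss.subset B).mpr hB))⟩
      · have hGne : (F \ M.E).Nonempty := by
          obtain ⟨x, hx1, hx2⟩ := exists_of_ssubset hss
          exact ⟨x, hx1, hx2⟩
        exact ⟨(caseB_flat hdisj hE hbase hss.subset hFE).mpr hNflat,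
          caseB_noColoop hdisj hE hbase hss.subset hFE hNcol hGne⟩
  · constructor
    · rintro ⟨hflat, hcyc⟩
      refine ⟨⟨M.ground_isFlat, fun e heF hcol => hcyc e heF
        (fun B hB => hcol B ((restrict_base_eq hdisj hbase Subset.rfl B).mp hB))⟩,
        ?_, fun e he => absurd he (Set.notMem_empty e)⟩
      have h1 := (caseB_flat hdisj hE hbase Subset.rfl subset_union_left).mp hflat
      simpa using h1
    · rintro ⟨⟨-, hMcol⟩, hNflat, -⟩
      exact ⟨(caseB_flat hdisj hE hbase Subset.rfl subset_union_left).mpr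
        (by simpa using hNflat),
        fun e heF hcol => hMcol e heF
          (fun B hB => hcol B ((restrict_base_eq hdisj hbase Subset.rfl B).mpr hB))⟩
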